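/- arXiv:1205.3674 — 12 statements merged into one kernel-verified Lean document; each statement's English description precedes it below -/
import Mathlib

section
/- A sequence (x_n) of real numbers is upward half Cauchy if and only if every subsequence of (x_n) is upward half quasi-Cauchy. -/
def UpHalfCauchy (x : ℕ → ℝ) : Prop :=
  ∀ ε > 0, ∃ n₀ : ℕ, ∀ n m : ℕ, n₀ ≤ n → n ≤ m → x n - x m < ε

def DownHalfCauchy (x : ℕ → ℝ) : Prop :=
  ∀ ε > 0, ∃ n₀ : ℕ, ∀ n m : ℕ, n₀ ≤ n → n ≤ m → x m - x n < ε

def UpHalfQuasiCauchy (x : ℕ → ℝ) : Prop :=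
  ∀ ε > 0, ∃ n₀ : ℕ, ∀ n : ℕ, n₀ ≤ n → x n - x (n + 1) < ε

def DownHalfQuasiCauchy (x : ℕ → ℝ) : Prop :=
  ∀ ε > 0, ∃ n₀ : ℕ, ∀ n : ℕ, n₀ ≤ n → x (n + 1) - x n < ε

def QuasiCauchy (x : ℕ → ℝ) : Prop :=
  ∀ ε > 0, ∃ n₀ : ℕ, ∀ n : ℕ, n₀ ≤ n → |x (n + 1) - x n| < ε

theorem stmt_0 (x : ℕ → ℝ) :
    UpHalfCauchy x ↔
      ∀ φ : ℕ → ℕ, StrictMono φ → UpHalfQuasiCauchy (x ∘ φ) := by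
  constructor
  · intro h φ hφ ε hε
    obtain ⟨n₀, hn₀⟩ := h ε hε
    refine ⟨n₀, fun n hn => ?_⟩
    exact hn₀ (φ n) (φ (n + 1)) (le_trans hn (le_trans (Nat.le_of_lt_succ (Nat.lt_succ_of_le hφ.le_apply)) le_rfl)) (hφ (Nat.lt_succ_self n)).le
  · intro h
    by_contra hc
    unfold UpHalfCauchy at hc
    push_neg at hc
    obtain ⟨ε, hε, hbad⟩ := hc
    have key : ∀ N : ℕ, ∃ p : ℕ × ℕ, N ≤ p.1 ∧ p.1 < p.2 ∧ ε ≤ x p.1 - x p.2 := by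
      intro N
      obtain ⟨n, m, hNn, hnm, hεle⟩ := hbad N
      refine ⟨(n, m), hNn, ?_, hεle⟩
      rcases lt_or_eq_of_le hnm with h' | h'
      · exact h'
      · exfalso; subst h'; simp at hεle; linarith
    choose g hg1 hg2 hg3 using key
    -- build sequence of pairs
    let G : ℕ → ℕ × ℕ := fun k => Nat.rec (g 0) (fun _ p => g (p.2 + 1)) k
    have hG1 : ∀ k, (G (k + 1)).1 = (g ((G k).2 + 1)).1 := fun k => rfl
    have hGprop : ∀ k, (G k).1 < (G k).2 ∧ ε ≤ x (G k).1 - x (G k).2 := by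
      intro k
      cases k with
      | zero => exact ⟨hg2 0, hg3 0⟩
      | succ n => exact ⟨hg2 _, hg3 _⟩
    have hGstep : ∀ k, (G k).2 < (G (k + 1)).1 := by
      intro k
      have := hg1 ((G k).2 + 1)
      exact lt_of_lt_of_le (Nat.lt_succ_self _) this
    let φ : ℕ → ℕ := fun n => if n % 2 = 0 then (G (n / 2)).1 else (G (n / 2)).2
    have eφ1 : ∀ k, φ (2 * k) = (G k).1 := by
      intro k
      have h2 : (2 * k) % 2 = 0 := by omega
      have h3 : (2 * k) / 2 = k := by omega
      simp only [φ, h2, h3, if_true]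
    have eφ2 : ∀ k, φ (2 * k + 1) = (G k).2 := by
      intro k
      have h2 : (2 * k + 1) % 2 = 1 := by omega
      have h3 : (2 * k + 1) / 2 = k := by omega
      simp only [φ, h2, h3]
      norm_num
    have hφ : StrictMono φ := by
      apply strictMono_nat_of_lt_succ
      intro n
      rcases Nat.even_or_odd n with he | ho
      · obtain ⟨k, hk⟩ := he
        have hn : n = 2 * k := by omega
        subst hn
        rw [eφ1 k, eφ2 k]; exact (hGprop k).1
      · obtain ⟨k, hk⟩ := ho
        subst hk
        have : 2 * k + 1 + 1 = 2 * (k + 1) := by omega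
        rw [eφ2 k, this, eφ1 (k + 1)]; exact hGstep k
    obtain ⟨n₀, hn₀⟩ := h φ hφ ε hε
    have := hn₀ (2 * n₀) (by omega)
    simp only [Function.comp, eφ1 n₀, eφ2 n₀] at this
    have := (hGprop n₀).2
    linarith
end

section
/- A sequence (x_n) of real numbers is downward half Cauchy if and only if every subsequence of (x_n) is downward half quasi-Cauchy. -/
theorem stmt_1 (x : ℕ → ℝ) :
    DownHalfCauchy x ↔
      ∀ φ : ℕ → ℕ, StrictMono φ → DownHalfQuasiCauchy (x ∘ φ) := by
  constructor
  · intro h φ hφ ε hε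
    obtain ⟨n₀, hn₀⟩ := h ε hε
    refine ⟨n₀, fun n hn => ?_⟩
    exact hn₀ (φ n) (φ (n + 1)) (le_trans hn hφ.le_apply)
      (le_of_lt (hφ (Nat.lt_succ_self n)))
  · intro H
    by_contra hc
    unfold DownHalfCauchy at hc
    push_neg at hc
    obtain ⟨ε, hε, hc⟩ := hc
    have key : ∀ p : ℕ, ∃ q : ℕ × ℕ, p < q.1 ∧ q.1 < q.2 ∧ ε ≤ x q.2 - x q.1 := by
      intro p
      obtain ⟨n, m, hn, hnm, hεnm⟩ := hc (p + 1)
      refine ⟨⟨n, m⟩, by omega, ?_, hεnm⟩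
      rcases lt_or_eq_of_le hnm with h | h
      · exact h
      · exfalso; rw [h] at hεnm; simp at hεnm; linarith
    choose f hf1 hf2 hf3 using key
    let g : ℕ → ℕ × ℕ := fun k => Nat.rec (f 0) (fun _ prev => f prev.2) k
    have hg1 : ∀ k, (g k).1 < (g k).2 := by
      intro k; cases k with
      | zero => exact hf2 0
      | succ k => exact hf2 (g k).2
    have hg2 : ∀ k, (g k).2 < (g (k + 1)).1 := fun k => hf1 (g k).2
    have hg3 : ∀ k, ε ≤ x (g k).2 - x (g k).1 := by
      intro k; cases k with
      | zero => exact hf3 0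
      | succ k => exact hf3 (g k).2
    let φ : ℕ → ℕ := fun n => if n % 2 = 0 then (g (n / 2)).1 else (g (n / 2)).2
    have hφ : StrictMono φ := by
      apply strictMono_nat_of_lt_succ
      intro n
      rcases Nat.even_or_odd n with ⟨k, hk⟩ | ⟨k, hk⟩
      · have h1 : n % 2 = 0 := by omega
        have h2 : (n + 1) % 2 = 1 := by omega
        have h3 : n / 2 = k := by omega
        have h4 : (n + 1) / 2 = k := by omega
        simp only [φ, h1, h2, h3, h4]
        simpa using hg1 k
      · have h1 : n % 2 = 1 := by omega
        have h2 : (n + 1) % 2 = 0 := by omega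
        have h3 : n / 2 = k := by omega
        have h4 : (n + 1) / 2 = k + 1 := by omega
        simp only [φ, h1, h2, h3, h4]
        simpa using hg2 k
    obtain ⟨n₀, hn₀⟩ := H φ hφ ε hε
    have := hn₀ (2 * n₀) (by omega)
    have h1 : (2 * n₀) % 2 = 0 := by omega
    have h2 : (2 * n₀ + 1) % 2 = 1 := by omega
    have h3 : (2 * n₀) / 2 = n₀ := by omega
    have h4 : (2 * n₀ + 1) / 2 = n₀ := by omega
    simp only [Function.comp, φ, h1, h2, h3, h4] at this
    simp at this
    linarith [hg3 n₀]
end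

section
/- If f : ℝ → ℝ is upward half Cauchy continuous on a set E ⊆ ℝ (i.e., f maps upward half Cauchy sequences of points of E to upward half Cauchy sequences), then f is sequentially continuous on E: for any sequence (x_n) of points in E converging to a point ℓ ∈ E, the sequence (f(x_n)) converges to f(ℓ). -/
theorem stmt_7 (f : ℝ → ℝ) (E : Set ℝ)
    (hf : ∀ x : ℕ → ℝ, (∀ n, x n ∈ E) → UpHalfCauchy x → UpHalfCauchy (fun n => f (x n)))
    (x : ℕ → ℝ) (hx : ∀ n, x n ∈ E) (ℓ : ℝ) (hℓ : ℓ ∈ E)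
    (hconv : Filter.Tendsto x Filter.atTop (nhds ℓ)) :
    Filter.Tendsto (fun n => f (x n)) Filter.atTop (nhds (f ℓ)) := by
  set y : ℕ → ℝ := fun n => if n % 2 = 0 then x (n / 2) else ℓ with hy
  have hyE : ∀ n, y n ∈ E := by
    intro n; simp only [hy]; split <;> [exact hx _; exact hℓ]
  have hmet := Metric.tendsto_atTop.1 hconv
  have hyclose : ∀ ε > (0:ℝ), ∃ N, ∀ k, N ≤ k → |y k - ℓ| < ε := by
    intro ε hε
    obtain ⟨N, hN⟩ := hmet ε hε
    refine ⟨2 * N, fun k hk => ?_⟩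
    simp only [hy]
    split
    · exact hN (k / 2) (by omega)
    · simpa using hε
  have hyUHC : UpHalfCauchy y := by
    intro ε hε
    obtain ⟨N, hN⟩ := hyclose (ε / 2) (by linarith)
    refine ⟨N, fun n m hn hm => ?_⟩
    have h1 := hN n hn
    have h2 := hN m (le_trans hn hm)
    have := abs_lt.1 h1
    have := abs_lt.1 h2
    linarith [this.1, this.2, (abs_lt.1 h1).1, (abs_lt.1 h1).2]
  have hg := hf y hyE hyUHC
  rw [Metric.tendsto_atTop]
  intro ε hε
  obtain ⟨n₀, hn₀⟩ := hg ε hε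
  refine ⟨n₀ + 1, fun n hn => ?_⟩
  have hy2n : y (2 * n) = x n := by simp [hy, Nat.mul_div_cancel_left]
  have hy2n1 : y (2 * n + 1) = ℓ := by simp [hy, Nat.mul_add_mod]
  have hodd : y (2 * n - 1) = ℓ := by
    have : (2 * n - 1) % 2 = 1 := by omega
    simp [hy, this]
  have h1 : f (y (2 * n)) - f (y (2 * n + 1)) < ε :=
    hn₀ (2 * n) (2 * n + 1) (by omega) (by omega)
  have h2 : f (y (2 * n - 1)) - f (y (2 * n)) < ε :=
    hn₀ (2 * n - 1) (2 * n) (by omega) (by omega)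
  rw [hy2n, hy2n1] at h1
  rw [hodd, hy2n] at h2
  rw [Real.dist_eq, abs_lt]
  constructor <;> linarith
end

section
/- If f : ℝ → ℝ is downward half Cauchy continuous on a set E ⊆ ℝ, then f is sequentially continuous on E: for any sequence (x_n) of points in E converging to a point ℓ ∈ E, the sequence (f(x_n)) converges to f(ℓ). -/
theorem stmt_8 (f : ℝ → ℝ) (E : Set ℝ)
    (hf : ∀ x : ℕ → ℝ, (∀ n, x n ∈ E) → DownHalfCauchy x → DownHalfCauchy (fun n => f (x n)))
    (x : ℕ → ℝ) (hx : ∀ n, x n ∈ E) (ℓ : ℝ) (hℓ : ℓ ∈ E)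
    (hconv : Filter.Tendsto x Filter.atTop (nhds ℓ)) :
    Filter.Tendsto (fun n => f (x n)) Filter.atTop (nhds (f ℓ)) := by
  set y : ℕ → ℝ := fun n => if Even n then x (n / 2) else ℓ with hy
  have hyE : ∀ n, y n ∈ E := by
    intro n
    simp only [hy]
    split <;> [exact hx _; exact hℓ]
  have hyc : DownHalfCauchy y := by
    intro ε hε
    obtain ⟨N, hN⟩ := Metric.tendsto_atTop.1 hconv (ε / 2) (by linarith)
    refine ⟨2 * N, fun n m hn hnm => ?_⟩
    have key : ∀ k, 2 * N ≤ k → |y k - ℓ| < ε / 2 := by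
      intro k hk
      simp only [hy]
      split
      · have : N ≤ k / 2 := Nat.le_div_iff_mul_le (by norm_num) |>.2 (by omega)
        exact hN _ this
      · simpa using by linarith
    have h1 := key n hn
    have h2 := key m (le_trans hn hnm)
    rw [abs_lt] at h1 h2
    linarith
  have hg := hf y hyE hyc
  rw [Metric.tendsto_atTop]
  intro ε hε
  obtain ⟨n₀, hn₀⟩ := hg ε hε
  refine ⟨n₀ + 1, fun n hn => ?_⟩
  obtain ⟨m, rfl⟩ : ∃ m, n = m + 1 := ⟨n - 1, by omega⟩
  have e1 : y (2 * (m + 1)) = x (m + 1) := by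
    simp only [hy]; rw [if_pos ⟨m + 1, by ring⟩]; norm_num
  have e2 : y (2 * m + 1) = ℓ := by
    simp only [hy]; rw [if_neg (by simp [Nat.even_add_one, parity_simps])]
  have e3 : y (2 * (m + 1) + 1) = ℓ := by
    simp only [hy]; rw [if_neg (by simp [Nat.even_add_one, parity_simps])]
  have h1 := hn₀ (2 * m + 1) (2 * (m + 1)) (by omega) (by omega)
  have h2 := hn₀ (2 * (m + 1)) (2 * (m + 1) + 1) (by omega) (by omega)
  simp only [e1, e2, e3] at h1 h2
  rw [Real.dist_eq, abs_lt]
  constructor <;> linarith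
end

section
/- If f : ℝ → ℝ is upward half quasi-Cauchy continuous on a set E ⊆ ℝ, then f is sequentially continuous on E: for any sequence (x_n) of points in E converging to a point ℓ ∈ E, the sequence (f(x_n)) converges to f(ℓ). -/
theorem stmt_9 (f : ℝ → ℝ) (E : Set ℝ)
    (hf : ∀ x : ℕ → ℝ, (∀ n, x n ∈ E) → UpHalfQuasiCauchy x → UpHalfQuasiCauchy (fun n => f (x n)))
    (x : ℕ → ℝ) (hx : ∀ n, x n ∈ E) (ℓ : ℝ) (hℓ : ℓ ∈ E)
    (hconv : Filter.Tendsto x Filter.atTop (nhds ℓ)) :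
    Filter.Tendsto (fun n => f (x n)) Filter.atTop (nhds (f ℓ)) := by
  set y : ℕ → ℝ := fun n => if n % 2 = 0 then x (n / 2) else ℓ with hy
  have hyE : ∀ n, y n ∈ E := by
    intro n
    simp only [hy]
    split <;> [exact hx _; exact hℓ]
  have hyU : UpHalfQuasiCauchy y := by
    intro ε hε
    rw [Metric.tendsto_atTop] at hconv
    obtain ⟨N, hN⟩ := hconv ε hε
    refine ⟨2 * N, fun n hn => ?_⟩
    rcases Nat.even_or_odd n with ⟨k, hk⟩ | ⟨k, hk⟩
    · have h1 : y n = x k := by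
        have e1 : n % 2 = 0 := by omega
        have e2 : n / 2 = k := by omega
        simp [hy, e1, e2]
      have h2 : y (n + 1) = ℓ := by
        have e1 : (n + 1) % 2 = 1 := by omega
        simp [hy, e1]
      have hk' : N ≤ k := by omega
      have := hN k hk'
      rw [Real.dist_eq] at this
      rw [h1, h2]
      calc x k - ℓ ≤ |x k - ℓ| := le_abs_self _
        _ < ε := this
    · have h1 : y n = ℓ := by
        have : n % 2 = 1 := by omega
        simp [hy, this]
      have h2 : y (n + 1) = x (k + 1) := by
        have e1 : (n + 1) % 2 = 0 := by omega
        have e2 : (n + 1) / 2 = k + 1 := by omega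
        simp [hy, e1, e2]
      have hk' : N ≤ k + 1 := by omega
      have := hN (k + 1) hk'
      rw [Real.dist_eq] at this
      rw [h1, h2]
      calc ℓ - x (k + 1) ≤ |x (k + 1) - ℓ| := by rw [abs_sub_comm]; exact le_abs_self _
        _ < ε := this
  have hfy := hf y hyE hyU
  rw [Metric.tendsto_atTop]
  intro ε hε
  obtain ⟨n₀, hn₀⟩ := hfy ε hε
  refine ⟨n₀ + 1, fun k hk => ?_⟩
  have e1 : y (2 * k) = x k := by simp [hy, Nat.mul_div_cancel_left]
  have e2 : y (2 * k + 1) = ℓ := by simp [hy, Nat.add_mod]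
  have e3 : y (2 * k - 1) = ℓ := by
    have : (2 * k - 1) % 2 = 1 := by omega
    simp [hy, this]
  have h1 := hn₀ (2 * k) (by omega)
  have h2 := hn₀ (2 * k - 1) (by omega)
  have e4 : 2 * k - 1 + 1 = 2 * k := by omega
  simp only [e1, e2] at h1
  simp only [e4, e3, e1] at h2
  rw [Real.dist_eq, abs_sub_lt_iff]
  exact ⟨h1, h2⟩
end

section
/- If f : ℝ → ℝ is downward half quasi-Cauchy continuous on a set E ⊆ ℝ, then f is sequentially continuous on E: for any sequence (x_n) of points in E converging to a point ℓ ∈ E, the sequence (f(x_n)) converges to f(ℓ). -/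
theorem stmt_10 (f : ℝ → ℝ) (E : Set ℝ)
    (hf : ∀ x : ℕ → ℝ, (∀ n, x n ∈ E) → DownHalfQuasiCauchy x → DownHalfQuasiCauchy (fun n => f (x n)))
    (x : ℕ → ℝ) (hx : ∀ n, x n ∈ E) (ℓ : ℝ) (hℓ : ℓ ∈ E)
    (hconv : Filter.Tendsto x Filter.atTop (nhds ℓ)) :
    Filter.Tendsto (fun n => f (x n)) Filter.atTop (nhds (f ℓ)) := by
  set y : ℕ → ℝ := fun n => if n % 2 = 0 then x (n / 2) else ℓ with hy
  have hyE : ∀ n, y n ∈ E := by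
    intro n
    simp only [hy]
    split <;> [exact hx _; exact hℓ]
  have hxconv := Metric.tendsto_atTop.mp hconv
  have hyq : DownHalfQuasiCauchy y := by
    intro ε hε
    obtain ⟨N, hN⟩ := hxconv ε hε
    refine ⟨2 * N, fun n hn => ?_⟩
    rcases Nat.even_or_odd n with ⟨k, hk⟩ | ⟨k, hk⟩
    · have h1 : n % 2 = 0 := by omega
      have h2 : (n + 1) % 2 ≠ 0 := by omega
      have h3 : n / 2 = k := by omega
      have hkN : N ≤ k := by omega
      simp only [hy, h1, if_pos rfl, if_neg h2, h3, if_true]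
      have := hN k hkN
      rw [Real.dist_eq] at this
      have := abs_lt.mp this
      linarith [this.1]
    · have h1 : n % 2 ≠ 0 := by omega
      have h2 : (n + 1) % 2 = 0 := by omega
      have h3 : (n + 1) / 2 = k + 1 := by omega
      have hkN : N ≤ k + 1 := by omega
      simp only [hy, if_neg h1, if_pos h2, h3, if_true]
      have := hN (k + 1) hkN
      rw [Real.dist_eq] at this
      have := abs_lt.mp this
      linarith [this.2]
  have hfy := hf y hyE hyq
  rw [Metric.tendsto_atTop]
  intro ε hε
  obtain ⟨n₀, hn₀⟩ := hfy ε hε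
  refine ⟨n₀ + 1, fun k hk => ?_⟩
  -- even index 2k : f ℓ - f (x k) < ε
  have he : f ℓ - f (x k) < ε := by
    have := hn₀ (2 * k) (by omega)
    have h1 : (2 * k) % 2 = 0 := by omega
    have h2 : (2 * k + 1) % 2 ≠ 0 := by omega
    have h3 : (2 * k) / 2 = k := by omega
    simpa [hy, h1, h2, h3] using this
  -- odd index 2k - 1 = 2(k-1)+1 : f (x k) - f ℓ < ε
  have ho : f (x k) - f ℓ < ε := by
    have := hn₀ (2 * (k - 1) + 1) (by omega)
    have h1 : (2 * (k - 1) + 1) % 2 ≠ 0 := by omega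
    have h2 : (2 * (k - 1) + 1 + 1) % 2 = 0 := by omega
    have h3 : (2 * (k - 1) + 1 + 1) / 2 = k := by omega
    simpa [hy, h1, h2, h3] using this
  rw [Real.dist_eq, abs_lt]
  constructor <;> linarith
end

section
/- If (f_n) is a sequence of functions from E ⊆ ℝ to ℝ, each upward half Cauchy continuous on E, and (f_n) converges uniformly on E to f, then f is upward half Cauchy continuous on E. -/
theorem stmt_11 (E : Set ℝ) (f : ℕ → ℝ → ℝ) (g : ℝ → ℝ)
    (hcont : ∀ n, ∀ x : ℕ → ℝ, (∀ k, x k ∈ E) → UpHalfCauchy x →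
      UpHalfCauchy (fun k => f n (x k)))
    (hunif : ∀ ε > (0 : ℝ), ∃ N : ℕ, ∀ n ≥ N, ∀ x ∈ E, |f n x - g x| < ε) :
    ∀ x : ℕ → ℝ, (∀ k, x k ∈ E) → UpHalfCauchy x →
      UpHalfCauchy (fun k => g (x k)) := by
  intro x hxE hx ε hε
  obtain ⟨N, hN⟩ := hunif (ε/3) (by linarith)
  obtain ⟨n₀, hn₀⟩ := hcont N x hxE hx (ε/3) (by linarith)
  refine ⟨n₀, fun n m hn hm => ?_⟩
  have h1 := hN N le_rfl (x n) (hxE n)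
  have h2 := hN N le_rfl (x m) (hxE m)
  have h3 := hn₀ n m hn hm
  simp only at h3
  rw [abs_lt] at h1 h2
  simp only
  linarith [h1.1, h1.2, h2.1, h2.2]
end

section
/- If (f_n) is a sequence of functions from E ⊆ ℝ to ℝ, each upward half quasi-Cauchy continuous on E, and (f_n) converges uniformly on E to f, then f is upward half quasi-Cauchy continuous on E. -/
theorem stmt_12 (E : Set ℝ) (f : ℕ → ℝ → ℝ) (g : ℝ → ℝ)
    (hcont : ∀ n, ∀ x : ℕ → ℝ, (∀ k, x k ∈ E) → UpHalfQuasiCauchy x →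
      UpHalfQuasiCauchy (fun k => f n (x k)))
    (hunif : ∀ ε > (0 : ℝ), ∃ N : ℕ, ∀ n ≥ N, ∀ x ∈ E, |f n x - g x| < ε) :
    ∀ x : ℕ → ℝ, (∀ k, x k ∈ E) → UpHalfQuasiCauchy x →
      UpHalfQuasiCauchy (fun k => g (x k)) := by
  intro x hx hqc ε hε
  obtain ⟨N, hN⟩ := hunif (ε/3) (by linarith)
  obtain ⟨n₀, hn₀⟩ := hcont N x hx hqc (ε/3) (by linarith)
  refine ⟨n₀, fun n hn => ?_⟩
  have h1 := hN N le_rfl (x n) (hx n)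
  have h2 := hN N le_rfl (x (n+1)) (hx (n+1))
  have h3 := hn₀ n hn
  simp only at h3 ⊢
  have a1 := abs_lt.mp h1
  have a2 := abs_lt.mp h2
  linarith
end

section
/- If (f_n) is a sequence of functions from E ⊆ ℝ to ℝ, each downward half quasi-Cauchy continuous on E, and (f_n) converges uniformly on E to f, then f is downward half quasi-Cauchy continuous on E. -/
theorem stmt_13 (E : Set ℝ) (f : ℕ → ℝ → ℝ) (g : ℝ → ℝ)
    (hcont : ∀ n, ∀ x : ℕ → ℝ, (∀ k, x k ∈ E) → DownHalfQuasiCauchy x →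
      DownHalfQuasiCauchy (fun k => f n (x k)))
    (hunif : ∀ ε > (0 : ℝ), ∃ N : ℕ, ∀ n ≥ N, ∀ x ∈ E, |f n x - g x| < ε) :
    ∀ x : ℕ → ℝ, (∀ k, x k ∈ E) → DownHalfQuasiCauchy x →
      DownHalfQuasiCauchy (fun k => g (x k)) := by
  intro x hxE hx ε hε
  obtain ⟨N, hN⟩ := hunif (ε / 3) (by linarith)
  obtain ⟨n₀, hn₀⟩ := hcont N x hxE hx (ε / 3) (by linarith)
  refine ⟨n₀, fun n hn => ?_⟩
  have h1 := hN N le_rfl (x (n + 1)) (hxE (n + 1))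
  have h2 := hN N le_rfl (x n) (hxE n)
  have h3 := hn₀ n hn
  simp only at h3 ⊢
  have a1 := abs_lt.mp h1
  have a2 := abs_lt.mp h2
  linarith [a1.1, a1.2, a2.1, a2.2]
end

section
/- If E ⊆ ℝ is upward half quasi-Cauchy compact and f : ℝ → ℝ is upward half quasi-Cauchy continuous on E, then f(E) is upward half quasi-Cauchy compact. -/
theorem stmt_14 (E : Set ℝ) (f : ℝ → ℝ)
    (hE : ∀ x : ℕ → ℝ, (∀ n, x n ∈ E) →
      ∃ φ : ℕ → ℕ, StrictMono φ ∧ UpHalfQuasiCauchy (x ∘ φ))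
    (hf : ∀ x : ℕ → ℝ, (∀ n, x n ∈ E) → UpHalfQuasiCauchy x →
      UpHalfQuasiCauchy (fun n => f (x n))) :
    ∀ y : ℕ → ℝ, (∀ n, y n ∈ f '' E) →
      ∃ φ : ℕ → ℕ, StrictMono φ ∧ UpHalfQuasiCauchy (y ∘ φ) := by
  intro y hy
  choose x hxE hxy using hy
  obtain ⟨φ, hφ, hup⟩ := hE x hxE
  refine ⟨φ, hφ, ?_⟩
  have := hf (x ∘ φ) (fun n => hxE (φ n)) hup
  intro ε hε
  obtain ⟨n₀, h⟩ := this ε hε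
  exact ⟨n₀, fun n hn => by
    simpa [Function.comp, hxy] using h n hn⟩
end

section
/- If E ⊆ ℝ is downward half Cauchy compact and f : ℝ → ℝ is downward half Cauchy continuous on E, then f(E) is downward half Cauchy compact. -/
theorem stmt_15 (E : Set ℝ) (f : ℝ → ℝ)
    (hE : ∀ x : ℕ → ℝ, (∀ n, x n ∈ E) →
      ∃ φ : ℕ → ℕ, StrictMono φ ∧ DownHalfCauchy (x ∘ φ))
    (hf : ∀ x : ℕ → ℝ, (∀ n, x n ∈ E) → DownHalfCauchy x →
      DownHalfCauchy (fun n => f (x n))) :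
    ∀ y : ℕ → ℝ, (∀ n, y n ∈ f '' E) →
      ∃ φ : ℕ → ℕ, StrictMono φ ∧ DownHalfCauchy (y ∘ φ) := by
  intro y hy
  choose x hxE hfx using hy
  obtain ⟨φ, hφ, hdc⟩ := hE x hxE
  refine ⟨φ, hφ, ?_⟩
  have := hf (x ∘ φ) (fun n => hxE (φ n)) hdc
  have heq : (fun n => f ((x ∘ φ) n)) = y ∘ φ := by
    funext n; simp [Function.comp, hfx]
  rwa [heq] at this
end

section
/- Every bounded subset of ℝ is upward half quasi-Cauchy compact: if E ⊆ ℝ is bounded, then every sequence of points in E has an upward half quasi-Cauchy subsequence. -/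
theorem stmt_16 (E : Set ℝ) (hE : Bornology.IsBounded E)
    (x : ℕ → ℝ) (hx : ∀ n, x n ∈ E) :
    ∃ φ : ℕ → ℕ, StrictMono φ ∧ UpHalfQuasiCauchy (x ∘ φ) := by
  obtain ⟨a, -, φ, hφ, hlim⟩ := tendsto_subseq_of_bounded hE hx
  refine ⟨φ, hφ, ?_⟩
  intro ε hε
  have h := Metric.tendsto_atTop.mp hlim (ε / 2) (by linarith)
  obtain ⟨N, hN⟩ := h
  refine ⟨N, fun n hn => ?_⟩
  have h1 := hN n hn
  have h2 := hN (n + 1) (by omega)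
  rw [Real.dist_eq] at h1 h2
  have := abs_lt.mp h1
  have := abs_lt.mp h2
  simp only [Function.comp_apply] at h1 h2 ⊢
  linarith [(abs_lt.mp h1).2, (abs_lt.mp h2).1]
end
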